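/- Let ψ₁, ψ₂ ∈ ℂ′, ε ∈ {i′, −i′}, and suppose the real number ρ := Re(2(ψ₂ψ̄₂ + ψ₁ψ̄₁)) is nonzero. Define N₁ := −(2/ρ)·ε·(ψ₁ψ₂ − ψ̄₁ψ̄₂), N₂ := (2/ρ)·ε·i′·(ψ₁ψ₂ + ψ̄₁ψ̄₂), N₃ := −(2/ρ)·(ψ₂ψ̄₂ − ψ₁ψ̄₁). Then N₁, N₂, N₃ have vanishing imaginary part (are real) and satisfy −N₁² + N₂² + N₃² = 1; that is, the normal Gauss map takes values in the de Sitter two-sphere {(x₁,x₂,x₃) ∈ ℝ³ : −x₁² + x₂² + x₃² = 1}. -/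

import Mathlib

noncomputable section

/-- Para-complex numbers modeled as the product ring ℝ × ℝ. -/
abbrev Cp : Type := ℝ × ℝ

/-- The para-complex unit i′ = (1, -1), satisfying i′² = 1. -/
def ip : Cp := (1, -1)

/-- Para-complex conjugation. -/
def pconj (z : Cp) : Cp := (z.2, z.1)

/-- Real part of a para-complex number. -/
def pRe (z : Cp) : ℝ := (z.1 + z.2) / 2

/-- Imaginary part of a para-complex number. -/
def pIm (z : Cp) : ℝ := (z.1 - z.2) / 2

/-- Embedding of ℝ into the para-complex numbers. -/
def oR (r : ℝ) : Cp := (r, r)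

/-- The exponential of the Banach algebra ℝ × ℝ (componentwise real exponential). -/
def pexp (z : Cp) : Cp := (Real.exp z.1, Real.exp z.2)

/-- The para-complex derivative ∂_z f = ½(∂ₓf + i′ ∂_y f). -/
def dz (f : Cp → Cp) (p : Cp) : Cp :=
  oR (1/2) * (fderiv ℝ f p (1, 0) + ip * fderiv ℝ f p (0, 1))

/-- The para-complex derivative ∂_z̄ f = ½(∂ₓf − i′ ∂_y f). -/
def dzbar (f : Cp → Cp) (p : Cp) : Cp :=
  oR (1/2) * (fderiv ℝ f p (1, 0) - ip * fderiv ℝ f p (0, 1))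

set_option maxHeartbeats 2000000 in
/-- The normal Gauss map takes values in the de Sitter two-sphere
{(x₁,x₂,x₃) ∈ ℝ³ : −x₁² + x₂² + x₃² = 1}. -/
theorem normal_gauss_map_de_sitter (ψ₁ ψ₂ ε : Cp) (hε : ε = ip ∨ ε = -ip)
    (ρ : ℝ) (hρdef : ρ = pRe (2 * (ψ₂ * pconj ψ₂ + ψ₁ * pconj ψ₁))) (hρ : ρ ≠ 0)
    (N₁ N₂ N₃ : Cp)
    (hN₁ : N₁ = -(oR (2 / ρ)) * ε * (ψ₁ * ψ₂ - pconj ψ₁ * pconj ψ₂))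
    (hN₂ : N₂ = oR (2 / ρ) * ε * ip * (ψ₁ * ψ₂ + pconj ψ₁ * pconj ψ₂))
    (hN₃ : N₃ = -(oR (2 / ρ)) * (ψ₂ * pconj ψ₂ - ψ₁ * pconj ψ₁)) :
    pIm N₁ = 0 ∧ pIm N₂ = 0 ∧ pIm N₃ = 0 ∧
    -N₁ ^ 2 + N₂ ^ 2 + N₃ ^ 2 = 1 ∧
    -(pRe N₁) ^ 2 + (pRe N₂) ^ 2 + (pRe N₃) ^ 2 = 1 := by

  obtain ⟨a, b⟩ := ψ₁
  obtain ⟨c, d⟩ := ψ₂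
  subst hρdef hN₁ hN₂ hN₃
  rcases hε with rfl | rfl <;>
    simp only [ip, pconj, pRe, pIm, oR, Prod.ext_iff, Prod.mk_mul_mk, Prod.mk_add_mk,
      Prod.neg_mk, Prod.mk_sub_mk, Prod.fst_one, Prod.snd_one, Prod.pow_mk,
      Prod.fst_mul, Prod.snd_mul, Prod.fst_ofNat, Prod.snd_ofNat] at hρ ⊢ <;>
    (have hY : 2 * (c * d + a * b) + 2 * (d * c + b * a) ≠ 0 := by
      intro h0; exact hρ (by rw [h0]; norm_num)) <;>
    refine ⟨by field_simp; ring, by field_simp; ring, by field_simp; ring,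
      ⟨by have hZ : c * d + a * b ≠ 0 := (by intro h0; apply hY; linarith [mul_comm c d, mul_comm a b]); field_simp; ring,
      by have hZ : c * d + a * b ≠ 0 := (by intro h0; apply hY; linarith [mul_comm c d, mul_comm a b]); field_simp; ring⟩,
      by have hZ : c * d + a * b ≠ 0 := (by intro h0; apply hY; linarith [mul_comm c d, mul_comm a b]); field_simp; ring⟩
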